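/- Let q ≡ 3 (mod 4) be an odd prime power with q ≠ 3, and let β ∈ NQR(q) with β ≠ −1. Then S_β = {{x, xβ} : x ∈ QR(q)} is a strong starter for the additive group of F; explicitly: (i) the elements x and xβ for x ∈ QR(q) are pairwise distinct and together constitute all of F \ {0}, i.e., F \ {0} is the disjoint union of QR(q) and β·QR(q); (ii) the differences x(1−β) and x(β−1) for x ∈ QR(q) are pairwise distinct and together constitute all of F \ {0}; (iii) the sums x(1+β) for x ∈ QR(q) are all nonzero, and the map x ↦ x(1+β) is injective on QR(q). -/
import Mathlib

/-- The set of nonzero squares (quadratic residues) of a field. -/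
def QR (F : Type*) [Field F] : Set F := {x | x ≠ 0 ∧ ∃ y, y ^ 2 = x}

/-- The set of nonzero non-squares of a field. -/
def NQR (F : Type*) [Field F] : Set F := {x | x ≠ 0 ∧ ¬ ∃ y, y ^ 2 = x}

lemma QR_eq (F : Type*) [Field F] : QR F = {z : F | z ≠ 0 ∧ IsSquare z} := by
  ext z
  simp only [QR, Set.mem_setOf_eq, IsSquare, sq, eq_comm]

lemma isSquare_mul_iff' {F : Type*} [Field F] [Fintype F] [DecidableEq F]
    {a b : F} (ha : a ≠ 0) (hb : b ≠ 0) :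
    IsSquare (a * b) ↔ (IsSquare a ↔ IsSquare b) := by
  rw [← quadraticChar_one_iff_isSquare (mul_ne_zero ha hb),
    ← quadraticChar_one_iff_isSquare ha, ← quadraticChar_one_iff_isSquare hb, map_mul]
  rcases quadraticChar_dichotomy ha with h | h <;>
    rcases quadraticChar_dichotomy hb with h' | h' <;> rw [h, h'] <;> norm_num

lemma image_mul_QR {F : Type*} [Field F] [Fintype F] [DecidableEq F]
    {c : F} (hc : c ≠ 0) :
    (fun x => x * c) '' QR F = {z : F | z ≠ 0 ∧ (IsSquare z ↔ IsSquare c)} := by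
  ext z
  simp only [QR_eq, Set.mem_image, Set.mem_setOf_eq]
  constructor
  · rintro ⟨x, ⟨hx0, hxs⟩, rfl⟩
    refine ⟨mul_ne_zero hx0 hc, ?_⟩
    rw [isSquare_mul_iff' hx0 hc]
    tauto
  · rintro ⟨hz, hiff⟩
    refine ⟨z * c⁻¹, ⟨mul_ne_zero hz (inv_ne_zero hc), ?_⟩, by field_simp⟩
    rw [isSquare_mul_iff' hz (inv_ne_zero hc), isSquare_inv]
    exact hiff

theorem starter_S_beta_is_strong_starter (q : ℕ) (hq : q % 4 = 3) (hq3 : q ≠ 3)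
    (F : Type*) [Field F] [Fintype F] (hcard : Fintype.card F = q)
    (β : F) (hβ : β ∈ NQR F) (hβ1 : β ≠ -1) :
    ((QR F ∪ (fun x => x * β) '' QR F = {x : F | x ≠ 0}) ∧
      Disjoint (QR F) ((fun x => x * β) '' QR F) ∧
      Set.InjOn (fun x => x * β) (QR F)) ∧
    (((fun x => x * (1 - β)) '' QR F ∪ (fun x => x * (β - 1)) '' QR F
        = {x : F | x ≠ 0}) ∧
      Disjoint ((fun x => x * (1 - β)) '' QR F) ((fun x => x * (β - 1)) '' QR F) ∧
      Set.InjOn (fun x => x * (1 - β)) (QR F) ∧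
      Set.InjOn (fun x => x * (β - 1)) (QR F)) ∧
    ((∀ x ∈ QR F, x * (1 + β) ≠ 0) ∧
      Set.InjOn (fun x => x * (1 + β)) (QR F)) := by
  classical
  obtain ⟨hβ0, hβns'⟩ := hβ
  have hβns : ¬ IsSquare β := by
    intro ⟨r, hr⟩; exact hβns' ⟨r, by rw [sq, hr]⟩
  have hm1 : ¬ IsSquare (-1 : F) := by
    rw [FiniteField.isSquare_neg_one_iff, hcard, hq]
    simp
  have h1β : (1 : F) - β ≠ 0 := by
    intro h
    exact hβns ⟨1, by linear_combination -h⟩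
  have hβ1' : β - 1 ≠ 0 := fun h => h1β (by linear_combination -h)
  have hsum : (1 : F) + β ≠ 0 := fun h => hβ1 (by linear_combination h)
  have hflip : IsSquare (β - 1) ↔ ¬ IsSquare (1 - β) := by
    have : β - 1 = (-1) * (1 - β) := by ring
    rw [this, isSquare_mul_iff' (by norm_num) h1β]
    tauto
  have inj : ∀ c : F, c ≠ 0 → Set.InjOn (fun x => x * c) (QR F) := by
    intro c hc a _ b _ hab
    exact mul_right_cancel₀ hc hab
  refine ⟨⟨?_, ?_, inj β hβ0⟩, ⟨?_, ?_, inj _ h1β, inj _ hβ1'⟩,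
    fun x hx => mul_ne_zero ((QR_eq F ▸ hx).1) hsum, inj _ hsum⟩
  · rw [image_mul_QR hβ0, QR_eq]
    ext z
    simp only [Set.mem_union, Set.mem_setOf_eq]
    constructor
    · rintro (⟨h, _⟩ | ⟨h, _⟩) <;> exact h
    · intro h
      by_cases hs : IsSquare z
      · exact Or.inl ⟨h, hs⟩
      · exact Or.inr ⟨h, by tauto⟩
  · rw [image_mul_QR hβ0, QR_eq, Set.disjoint_left]
    rintro z ⟨_, hs⟩ ⟨_, hiff⟩
    exact hβns (hiff.mp hs)
  · rw [image_mul_QR h1β, image_mul_QR hβ1']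
    ext z
    simp only [Set.mem_union, Set.mem_setOf_eq]
    constructor
    · rintro (⟨h, _⟩ | ⟨h, _⟩) <;> exact h
    · intro h
      by_cases hs : IsSquare (1 - β)
      · by_cases hz : IsSquare z
        · exact Or.inl ⟨h, by tauto⟩
        · exact Or.inr ⟨h, by rw [hflip]; tauto⟩
      · by_cases hz : IsSquare z
        · exact Or.inr ⟨h, by rw [hflip]; tauto⟩
        · exact Or.inl ⟨h, by tauto⟩
  · rw [image_mul_QR h1β, image_mul_QR hβ1', Set.disjoint_left]
    rintro z ⟨_, h1⟩ ⟨_, h2⟩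
    rw [hflip] at h2
    tauto
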